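/- Let p ∈ ℕ, λ ≥ 0, Σ̂ a p×p real symmetric positive semidefinite matrix, Σ̂_λ := Σ̂ + λ·I_p, β_λ, γ ∈ ℝ^p and t ≥ 0. Assume the condition ⟨Σ̂_λ((I_p + t·Σ̂_λ)^{-1} − exp(−t·Σ̂_λ))β_λ, γ − β_λ⟩ ≥ 0. Then the gradient-flow approximation error is bounded by the ridge approximation error: ‖Σ̂_λ^{1/2}(exp(−t·Σ̂_λ)β_λ + (γ − β_λ))‖² ≤ ‖Σ̂_λ^{1/2}((I_p + t·Σ̂_λ)^{-1}β_λ + (γ − β_λ))‖². -/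

import Mathlib

open Matrix

/-- Squared Euclidean norm on `Fin p → ℝ`. -/
noncomputable def sqnorm {p : ℕ} (v : Fin p → ℝ) : ℝ := ∑ i, (v i) ^ 2

/-- Euclidean inner product on `Fin p → ℝ`. -/
noncomputable def ip {p : ℕ} (v w : Fin p → ℝ) : ℝ := ∑ i, v i * w i

/-- The positive semidefinite square root, as `Matrix.PosSemidef.sqrt` was defined in Mathlib
(Dec 2024); it has since been removed from Mathlib. -/
noncomputable def Matrix.PosSemidef.sqrt {n : Type*} [Fintype n] [DecidableEq n]
    {A : Matrix n n ℝ} (hA : A.PosSemidef) : Matrix n n ℝ :=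
  hA.1.eigenvectorUnitary.1 * diagonal ((↑) ∘ (Real.sqrt ∘ hA.1.eigenvalues)) *
  (star hA.1.eigenvectorUnitary : Matrix n n ℝ)

lemma ip_eq_dot {p : ℕ} (v w : Fin p → ℝ) : ip v w = v ⬝ᵥ w := rfl

lemma dot_orth {p : ℕ} (U : Matrix (Fin p) (Fin p) ℝ) (hU : Uᵀ * U = 1)
    (a b : Fin p → ℝ) : (U *ᵥ a) ⬝ᵥ (U *ᵥ b) = a ⬝ᵥ b := by
  rw [dotProduct_mulVec, ← mulVec_transpose, mulVec_mulVec, hU, one_mulVec]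

lemma ip_conj_diag {p : ℕ} (U : Matrix (Fin p) (Fin p) ℝ) (hU : Uᵀ * U = 1)
    (d e x : Fin p → ℝ) :
    ((U * diagonal d * Uᵀ) *ᵥ x) ⬝ᵥ ((U * diagonal e * Uᵀ) *ᵥ x)
      = ∑ i, d i * e i * ((Uᵀ *ᵥ x) i) ^ 2 := by
  simp only [← mulVec_mulVec]
  rw [dot_orth U hU]
  simp only [dotProduct, mulVec_diagonal]
  exact Finset.sum_congr rfl fun i _ => by ring

lemma conj_mul_conj {p : ℕ} (U : Matrix (Fin p) (Fin p) ℝ) (hU : Uᵀ * U = 1)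
    (d e : Fin p → ℝ) :
    (U * diagonal d * Uᵀ) * (U * diagonal e * Uᵀ)
      = U * diagonal (fun i => d i * e i) * Uᵀ := by
  simp only [Matrix.mul_assoc]
  rw [← Matrix.mul_assoc Uᵀ U, hU, Matrix.one_mul, ← Matrix.mul_assoc (diagonal d),
    diagonal_mul_diagonal]

/-- under the compatibility condition on the target vector `γ`, the gradient-flow
approximation error is bounded by the ridge approximation error. -/
theorem gf_ridge_approximation_comparison
    (p : ℕ) (lam : ℝ) (hlam : 0 ≤ lam)
    (Sig : Matrix (Fin p) (Fin p) ℝ) (hSig : Sig.PosSemidef)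
    (Sigl : Matrix (Fin p) (Fin p) ℝ) (hSigl_def : Sigl = Sig + lam • 1)
    (hSigl : Sigl.PosSemidef)
    (betal gam : Fin p → ℝ) (t : ℝ) (ht : 0 ≤ t)
    (hcond : 0 ≤ ip (Sigl *ᵥ (((1 + t • Sigl)⁻¹ - NormedSpace.exp (-(t • Sigl))) *ᵥ betal))
        (gam - betal)) :
    sqnorm (hSigl.sqrt *ᵥ (NormedSpace.exp (-(t • Sigl)) *ᵥ betal + (gam - betal))) ≤
      sqnorm (hSigl.sqrt *ᵥ ((1 + t • Sigl)⁻¹ *ᵥ betal + (gam - betal))) := by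
  set U : Matrix (Fin p) (Fin p) ℝ := (hSigl.1.eigenvectorUnitary : Matrix (Fin p) (Fin p) ℝ)
    with hUdef
  set μ : Fin p → ℝ := hSigl.1.eigenvalues with hμdef
  have hstar : star U = Uᵀ := by
    rw [Matrix.star_eq_conjTranspose, conjTranspose_eq_transpose_of_trivial]
  have hUtU : Uᵀ * U = 1 := by
    rw [← hstar]; exact mem_unitaryGroup_iff'.mp hSigl.1.eigenvectorUnitary.2
  have hUUt : U * Uᵀ = 1 := by
    rw [← hstar]; exact mem_unitaryGroup_iff.mp hSigl.1.eigenvectorUnitary.2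
  have hSpec : Sigl = U * diagonal μ * Uᵀ := by
    rw [← hstar]
    have := hSigl.1.spectral_theorem
    simpa [RCLike.ofReal_real_eq_id] using this
  have hμ0 : ∀ i, 0 ≤ μ i := fun i => hSigl.eigenvalues_nonneg i
  have hpos : ∀ i, (0 : ℝ) < 1 + t * μ i := fun i => by nlinarith [hμ0 i]
  have hUinv : U⁻¹ = Uᵀ := inv_eq_left_inv hUtU
  have hUunit : IsUnit U := ⟨⟨U, Uᵀ, hUUt, hUtU⟩, rfl⟩
  -- the matrix exponential in the eigenbasis
  have hA : NormedSpace.exp (-(t • Sigl))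
      = U * diagonal (fun i => Real.exp (-(t * μ i))) * Uᵀ := by
    have h1 : -(t • Sigl) = U * diagonal (fun i => -(t * μ i)) * Uᵀ := by
      rw [hSpec]
      have h2 : (fun i => -(t * μ i)) = (-t) • μ := by funext i; simp
      rw [h2, diagonal_smul]
      simp only [Matrix.mul_smul, Matrix.smul_mul, neg_smul, Matrix.mul_neg,
        Matrix.neg_mul]
    rw [h1, ← hUinv, Matrix.exp_conj U _ hUunit, Matrix.exp_diagonal,
      Pi.exp_def]
    simp only [← Real.exp_eq_exp_ℝ]
  -- the ridge resolvent in the eigenbasis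
  have hsum : 1 + t • Sigl = U * diagonal (fun i => 1 + t * μ i) * Uᵀ := by
    have h2 : diagonal (fun i => 1 + t * μ i) = 1 + t • diagonal μ := by
      ext i j
      rcases eq_or_ne i j with h | h <;>
        simp [Matrix.diagonal_apply, Matrix.one_apply, h]
    rw [h2, Matrix.mul_add, Matrix.add_mul, Matrix.mul_one, hUUt, hSpec]
    simp only [Matrix.mul_smul, Matrix.smul_mul]
  have hB : (1 + t • Sigl)⁻¹ = U * diagonal (fun i => (1 + t * μ i)⁻¹) * Uᵀ := by
    refine inv_eq_right_inv ?_
    rw [hsum, conj_mul_conj U hUtU]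
    have h3 : (fun i => (1 + t * μ i) * (1 + t * μ i)⁻¹) = fun _ : Fin p => (1 : ℝ) := by
      funext i; exact mul_inv_cancel₀ (hpos i).ne'
    rw [h3, diagonal_one, Matrix.mul_one, hUUt]
  -- reduce sqnorm of sqrt-image to the quadratic form of Sigl
  have hSiglT : Siglᵀ = Sigl := by
    have := hSigl.1
    rwa [Matrix.IsHermitian, conjTranspose_eq_transpose_of_trivial] at this
  have hsqnorm : ∀ w : Fin p → ℝ, sqnorm (hSigl.sqrt *ᵥ w) = (Sigl *ᵥ w) ⬝ᵥ w := by
    intro w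
    have hsqrtdef : hSigl.sqrt = U * diagonal (fun i => Real.sqrt (μ i)) * Uᵀ := by
      rw [← hstar]; rfl
    have hs : (hSigl.sqrt)ᵀ = hSigl.sqrt := by
      simp [hsqrtdef, Matrix.transpose_mul, Matrix.mul_assoc]
    have hmul : hSigl.sqrt * hSigl.sqrt = Sigl := by
      rw [hsqrtdef, conj_mul_conj U hUtU, hSpec]
      congr 3
      funext i
      exact Real.mul_self_sqrt (hμ0 i)
    have h4 : sqnorm (hSigl.sqrt *ᵥ w) = (hSigl.sqrt *ᵥ w) ⬝ᵥ (hSigl.sqrt *ᵥ w) := by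
      simp [sqnorm, dotProduct, pow_two]
    rw [h4, dotProduct_mulVec, ← mulVec_transpose, hs, mulVec_mulVec, hmul]
  -- symmetry of the quadratic form
  have hsym : ∀ x y : Fin p → ℝ, (Sigl *ᵥ x) ⬝ᵥ y = (Sigl *ᵥ y) ⬝ᵥ x := by
    intro x y
    conv_lhs => rw [dotProduct_comm, dotProduct_mulVec, ← mulVec_transpose, hSiglT]
  -- the condition, in dot-product form
  have hcond' : (Sigl *ᵥ (NormedSpace.exp (-(t • Sigl)) *ᵥ betal)) ⬝ᵥ (gam - betal)
      ≤ (Sigl *ᵥ ((1 + t • Sigl)⁻¹ *ᵥ betal)) ⬝ᵥ (gam - betal) := by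
    rw [ip_eq_dot] at hcond
    rw [Matrix.sub_mulVec, mulVec_sub, sub_dotProduct] at hcond
    linarith
  -- the main spectral inequality
  have hmain : (Sigl *ᵥ (NormedSpace.exp (-(t • Sigl)) *ᵥ betal))
        ⬝ᵥ (NormedSpace.exp (-(t • Sigl)) *ᵥ betal)
      ≤ (Sigl *ᵥ ((1 + t • Sigl)⁻¹ *ᵥ betal)) ⬝ᵥ ((1 + t • Sigl)⁻¹ *ᵥ betal) := by
    have hSA : Sigl * NormedSpace.exp (-(t • Sigl))
        = U * diagonal (fun i => μ i * Real.exp (-(t * μ i))) * Uᵀ := by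
      rw [hA, hSpec, conj_mul_conj U hUtU]
    have hSB : Sigl * (1 + t • Sigl)⁻¹
        = U * diagonal (fun i => μ i * (1 + t * μ i)⁻¹) * Uᵀ := by
      rw [hB, hSpec, conj_mul_conj U hUtU]
    rw [mulVec_mulVec, mulVec_mulVec, hSA, hSB, hA, hB, ip_conj_diag U hUtU,
      ip_conj_diag U hUtU]
    refine Finset.sum_le_sum fun i _ => ?_
    have hkey : Real.exp (-(t * μ i)) ≤ (1 + t * μ i)⁻¹ := by
      rw [Real.exp_neg]
      exact inv_anti₀ (hpos i) (by linarith [Real.add_one_le_exp (t * μ i)])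
    have hE := Real.exp_nonneg (-(t * μ i))
    have hEI : Real.exp (-(t * μ i)) * Real.exp (-(t * μ i))
        ≤ (1 + t * μ i)⁻¹ * (1 + t * μ i)⁻¹ :=
      mul_le_mul hkey hkey hE (inv_nonneg.mpr (hpos i).le)
    have hc := sq_nonneg ((Uᵀ *ᵥ betal) i)
    nlinarith [mul_le_mul_of_nonneg_left hEI (mul_nonneg (hμ0 i) hc)]
  -- put everything together
  rw [hsqnorm, hsqnorm]
  simp only [mulVec_add, add_dotProduct, dotProduct_add]
  rw [hsym (gam - betal) (NormedSpace.exp (-(t • Sigl)) *ᵥ betal),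
    hsym (gam - betal) ((1 + t • Sigl)⁻¹ *ᵥ betal)]
  linarith
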